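/- Let N ≥ 2, ℓ_1,...,ℓ_N > 0, τ > 0 with sin(τℓ_j) ≠ 0 for all j and ∑_j cot(τℓ_j) = 0, ρ = (∑_j ℓ_j/sin²(τℓ_j))^{-1}, γ_0 = 1/(16eN). Then for every γ ∈ (0,γ_0], every z ∈ ℂ with |z − τ| ≤ γρ, and every j, one has |sin(zℓ_j)| ≥ (ℓ_j ρ)^{1/2}/2. -/

import Mathlib

open Complex Real Finset

/-- `|cos w| ≤ e` on the strip `|Im w| ≤ 1`. -/
lemma abs_cos_le_exp_one {w : ℂ} (hw : |w.im| ≤ 1) :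
    ‖Complex.cos w‖ ≤ Real.exp 1 := by
  rw [Complex.cos]
  have h1 : ‖Complex.exp (w * Complex.I)‖ = Real.exp (-w.im) := by
    rw [Complex.norm_exp]; congr 1; simp
  have h2 : ‖Complex.exp (-w * Complex.I)‖ = Real.exp (w.im) := by
    rw [Complex.norm_exp]; congr 1; simp
  calc ‖(Complex.exp (w * Complex.I) + Complex.exp (-w * Complex.I)) / 2‖
      ≤ (Real.exp (-w.im) + Real.exp (w.im)) / 2 := by
        rw [norm_div, Complex.norm_two]
        gcongr
        calc ‖Complex.exp (w * Complex.I) + Complex.exp (-w * Complex.I)‖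
            ≤ _ + _ := norm_add_le _ _
          _ = Real.exp (-w.im) + Real.exp (w.im) := by rw [h1, h2]
    _ ≤ (Real.exp 1 + Real.exp 1) / 2 := by
        gcongr <;> cases abs_le.1 hw <;> linarith
    _ = Real.exp 1 := by ring

/-- Lipschitz bound for `sin` on the strip `|Im w| ≤ 1`. -/
lemma sin_lipschitz {a b : ℂ} (ha : |a.im| ≤ 1) (hb : |b.im| ≤ 1) :
    ‖Complex.sin a - Complex.sin b‖ ≤ Real.exp 1 * ‖a - b‖ := by
  set s : Set ℂ := {w : ℂ | |w.im| ≤ 1} with hs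
  have hconv : Convex ℝ s := by
    intro x hx y hy p q hp hq hpq
    simp only [hs, Set.mem_setOf_eq] at *
    calc |(p • x + q • y).im| = |p * x.im + q * y.im| := by simp
      _ ≤ |p * x.im| + |q * y.im| := abs_add_le _ _
      _ = p * |x.im| + q * |y.im| := by rw [abs_mul, abs_mul, _root_.abs_of_nonneg hp, _root_.abs_of_nonneg hq]
      _ ≤ p * 1 + q * 1 := by gcongr
      _ = 1 := by linarith
  exact hconv.norm_image_sub_le_of_norm_hasDerivWithin_le
    (fun x _ => (Complex.hasDerivAt_sin x).hasDerivWithinAt)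
    (fun x hx => abs_cos_le_exp_one hx) hb ha

/-- Lower bound `|sin(z ℓ_j)| ≥ √(ℓ_j ρ)/2` on the disk `D(τ, γρ)`, `γ ∈ (0, γ₀]`. -/
theorem sin_lower_bound (N : ℕ) (hN : 2 ≤ N) (ℓ : Fin N → ℝ) (hℓ : ∀ j, 0 < ℓ j)
    (τ : ℝ) (hτ : 0 < τ) (hsin : ∀ j, Real.sin (τ * ℓ j) ≠ 0)
    (hzero : ∑ j : Fin N, Real.cot (τ * ℓ j) = 0)
    (ρ : ℝ) (hρ : ρ = (∑ j : Fin N, ℓ j / Real.sin (τ * ℓ j) ^ 2)⁻¹)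
    (γ : ℝ) (hγ : γ ∈ Set.Ioc 0 (1 / (16 * Real.exp 1 * N)))
    (z : ℂ) (hz : ‖z - (τ : ℂ)‖ ≤ γ * ρ) :
    ∀ j : Fin N, Real.sqrt (ℓ j * ρ) / 2 ≤ ‖Complex.sin (z * (ℓ j : ℂ))‖ := by
  intro j
  obtain ⟨hγ0, hγ1⟩ := hγ
  have he : (1 : ℝ) < Real.exp 1 := by
    have := Real.exp_one_gt_d9; linarith
  have hNpos : (0 : ℝ) < N := by positivity
  have hN2 : (2 : ℝ) ≤ N := by exact_mod_cast hN
  have hterm : ∀ i, 0 < ℓ i / Real.sin (τ * ℓ i) ^ 2 := fun i =>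
    div_pos (hℓ i) (by have h := hsin i; positivity)
  have hsum_pos : 0 < ∑ i : Fin N, ℓ i / Real.sin (τ * ℓ i) ^ 2 :=
    Finset.sum_pos (fun i _ => hterm i) ⟨⟨0, by omega⟩, Finset.mem_univ _⟩
  have hρ_pos : 0 < ρ := hρ ▸ inv_pos.2 hsum_pos
  have hρ_le : ℓ j * ρ ≤ Real.sin (τ * ℓ j) ^ 2 := by
    have h1 : ℓ j / Real.sin (τ * ℓ j) ^ 2 ≤ ∑ i : Fin N, ℓ i / Real.sin (τ * ℓ i) ^ 2 :=
      Finset.single_le_sum (fun i _ => (hterm i).le) (Finset.mem_univ j)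
    have h2 : ρ ≤ (ℓ j / Real.sin (τ * ℓ j) ^ 2)⁻¹ := hρ ▸ inv_anti₀ (hterm j) h1
    rw [inv_div] at h2
    have := (le_div_iff₀ (hℓ j)).1 h2
    linarith [this]
  have hsin2 : Real.sin (τ * ℓ j) ^ 2 ≤ 1 := by
    rw [← Real.sin_sq_add_cos_sq (τ * ℓ j)]; nlinarith [sq_nonneg (Real.cos (τ * ℓ j))]
  have hρℓ_le1 : ℓ j * ρ ≤ 1 := hρ_le.trans hsin2
  have hρℓ_pos : 0 < ℓ j * ρ := mul_pos (hℓ j) hρ_pos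
  set S := Real.sqrt (ℓ j * ρ) with hS
  have hS_pos : 0 < S := Real.sqrt_pos.2 hρℓ_pos
  have hS_le1 : S ≤ 1 := by rw [hS, show (1:ℝ) = Real.sqrt 1 by simp]; exact Real.sqrt_le_sqrt hρℓ_le1
  have hS_sq : S ^ 2 = ℓ j * ρ := Real.sq_sqrt hρℓ_pos.le
  -- |sin(τ ℓ j)| ≥ S
  have hsin_lb : S ≤ ‖Complex.sin ((τ : ℂ) * (ℓ j : ℂ))‖ := by
    have : ((τ : ℂ) * (ℓ j : ℂ)) = ((τ * ℓ j : ℝ) : ℂ) := by push_cast; ring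
    rw [this, ← Complex.ofReal_sin, Complex.norm_real, Real.norm_eq_abs]
    rw [hS]
    calc Real.sqrt (ℓ j * ρ) ≤ Real.sqrt (Real.sin (τ * ℓ j) ^ 2) := Real.sqrt_le_sqrt hρ_le
      _ = |Real.sin (τ * ℓ j)| := Real.sqrt_sq_eq_abs _
  -- γ is small
  have hγ_small : Real.exp 1 * γ ≤ 1 / 2 := by
    have h16 : (0:ℝ) < 16 * Real.exp 1 * N := by positivity
    have := mul_le_mul_of_nonneg_left hγ1 (Real.exp_pos 1).le
    calc Real.exp 1 * γ ≤ Real.exp 1 * (1 / (16 * Real.exp 1 * N)) := this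
      _ = 1 / (16 * N) := by field_simp
      _ ≤ 1 / 2 := by rw [div_le_div_iff₀ (by positivity) (by norm_num)]; nlinarith
  have hγ_le1 : γ ≤ 1 := by nlinarith
  -- strip membership
  have him_z : |z.im| ≤ γ * ρ := by
    have : z.im = (z - (τ : ℂ)).im := by simp
    rw [this]
    exact (Complex.abs_im_le_norm _).trans hz
  have hstrip_z : |((z * (ℓ j : ℂ)).im)| ≤ 1 := by
    have him : (z * (ℓ j : ℂ)).im = z.im * ℓ j := by simp
    rw [him, abs_mul, abs_of_pos (hℓ j)]
    calc |z.im| * ℓ j ≤ γ * ρ * ℓ j := mul_le_mul_of_nonneg_right him_z (hℓ j).le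
      _ = γ * (ℓ j * ρ) := by ring
      _ ≤ 1 * 1 := by
          apply mul_le_mul hγ_le1 hρℓ_le1 hρℓ_pos.le zero_le_one
      _ = 1 := by ring
  have hstrip_τ : |(((τ : ℂ) * (ℓ j : ℂ)).im)| ≤ 1 := by
    have : ((τ : ℂ) * (ℓ j : ℂ)).im = 0 := by simp
    rw [this]; norm_num
  -- Lipschitz estimate
  have hlip : ‖Complex.sin (z * (ℓ j : ℂ)) - Complex.sin ((τ : ℂ) * (ℓ j : ℂ))‖
      ≤ S / 2 := by
    calc ‖Complex.sin (z * (ℓ j : ℂ)) - Complex.sin ((τ : ℂ) * (ℓ j : ℂ))‖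
        ≤ Real.exp 1 * ‖z * (ℓ j : ℂ) - (τ : ℂ) * (ℓ j : ℂ)‖ :=
          sin_lipschitz hstrip_z hstrip_τ
      _ = Real.exp 1 * (‖z - (τ : ℂ)‖ * ℓ j) := by
          rw [show z * (ℓ j : ℂ) - (τ : ℂ) * (ℓ j : ℂ) = (z - (τ : ℂ)) * (ℓ j : ℂ) by ring,
            norm_mul, Complex.norm_real, Real.norm_eq_abs, abs_of_pos (hℓ j)]
      _ ≤ Real.exp 1 * (γ * ρ * ℓ j) :=
          mul_le_mul_of_nonneg_left (mul_le_mul_of_nonneg_right hz (hℓ j).le)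
            (Real.exp_pos 1).le
      _ = (Real.exp 1 * γ) * (ℓ j * ρ) := by ring
      _ ≤ (1 / 2) * (S * 1) := by
          rw [← hS_sq, sq]
          apply mul_le_mul hγ_small (by nlinarith) (by positivity) (by norm_num)
      _ = S / 2 := by ring
  calc S / 2 = S - S / 2 := by ring
    _ ≤ ‖Complex.sin ((τ : ℂ) * (ℓ j : ℂ))‖
        - ‖Complex.sin (z * (ℓ j : ℂ)) - Complex.sin ((τ : ℂ) * (ℓ j : ℂ))‖ := by
          gcongr
    _ ≤ ‖Complex.sin (z * (ℓ j : ℂ))‖ := by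
          have htri : ‖Complex.sin ((τ : ℂ) * (ℓ j : ℂ))‖
              ≤ ‖Complex.sin (z * (ℓ j : ℂ))‖
                + ‖Complex.sin (z * (ℓ j : ℂ)) - Complex.sin ((τ : ℂ) * (ℓ j : ℂ))‖ := by
            have h := norm_add_le
              (Complex.sin ((τ : ℂ) * (ℓ j : ℂ)) - Complex.sin (z * (ℓ j : ℂ)))
              (Complex.sin (z * (ℓ j : ℂ)))
            rw [sub_add_cancel, norm_sub_rev] at h
            linarith [h]
          linarith
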